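/- Let ρ, A, B be nonzero positive semidefinite operators on a finite-dimensional complex Hilbert space H with ρ positive definite. Then tr[ρ(A+B)²]/tr(A+B) ≤ tr(ρA²)/tr(A) + tr(ρB²)/tr(B), with equality if and only if A is proportional to B. -/

import Mathlib

open Matrix ComplexOrder BigOperators

lemma diag_nonneg' {d : ℕ} {M : Matrix (Fin d) (Fin d) ℂ} (hM : M.PosSemidef) (i : Fin d) :
    0 ≤ M i i := by
  exact hM.diag_nonneg

lemma trace_nonneg' {d : ℕ} {M : Matrix (Fin d) (Fin d) ℂ} (hM : M.PosSemidef) :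
    0 ≤ M.trace :=
  Finset.sum_nonneg fun i _ => diag_nonneg' hM i

lemma trace_real' {d : ℕ} {M : Matrix (Fin d) (Fin d) ℂ} (hM : M.PosSemidef) :
    M.trace = (M.trace.re : ℂ) := by
  have h := trace_nonneg' hM
  rw [Complex.le_def] at h
  have him : M.trace.im = 0 := by simpa using h.2.symm
  exact Complex.ext (by simp) (by simp [him])

lemma trace_ctms_zero {d : ℕ} {M : Matrix (Fin d) (Fin d) ℂ}
    (h : (Mᴴ * M).trace = 0) : M = 0 := by
  have hsum : ∑ j, ∑ i, Complex.normSq (M i j) = 0 := by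
    have := congrArg Complex.re h
    simpa [Matrix.trace, Matrix.diag, Matrix.mul_apply, Complex.normSq, Complex.mul_re] using this
  ext i j
  have hj := (Finset.sum_eq_zero_iff_of_nonneg
    (fun j _ => Finset.sum_nonneg fun i _ => Complex.normSq_nonneg _)).mp hsum j (Finset.mem_univ j)
  have := (Finset.sum_eq_zero_iff_of_nonneg
    (fun i _ => Complex.normSq_nonneg _)).mp hj i (Finset.mem_univ i)
  simpa using Complex.normSq_eq_zero.mp this

open scoped MatrixOrder in
lemma psd_eq_ctms {d : ℕ} {M : Matrix (Fin d) (Fin d) ℂ} (hM : M.PosSemidef) :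
    ∃ X : Matrix (Fin d) (Fin d) ℂ, M = Xᴴ * X := by
  obtain ⟨X, hX, -, hXX⟩ :=
    CFC.exists_sqrt_of_isSelfAdjoint_of_quasispectrumRestricts hM.isHermitian
      (QuasispectrumRestricts.nnreal_of_nonneg hM.nonneg)
  refine ⟨X, ?_⟩
  rw [← hXX]
  nth_rewrite 1 [← hX.star_eq]
  rfl

lemma psd_trace_eq_zero {d : ℕ} {M : Matrix (Fin d) (Fin d) ℂ} (hM : M.PosSemidef)
    (h : M.trace = 0) : M = 0 := by
  obtain ⟨X, hX⟩ := psd_eq_ctms hM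
  have h1 : Xᴴ * X = M := hX.symm
  have h2 : X = 0 := trace_ctms_zero (by rw [h1, h])
  rw [← h1, h2, Matrix.mul_zero]

lemma key_zero' {d : ℕ} {ρ C : Matrix (Fin d) (Fin d) ℂ} (hρ : ρ.PosDef) (hC : C.IsHermitian)
    (h : (ρ * C * C).trace = 0) : C = 0 := by
  have hcyc : (ρ * C * C).trace = (Cᴴ * ρ * C).trace := by
    conv_rhs => rw [hC.eq]
    exact trace_mul_cycle ρ C C
  have hzero : Cᴴ * ρ * C = 0 :=
    psd_trace_eq_zero (hρ.posSemidef.conjTranspose_mul_mul_same C) (by rw [← hcyc, h])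
  obtain ⟨s, hs⟩ := psd_eq_ctms hρ.posSemidef
  have hss : sᴴ * s = ρ := hs.symm
  have h3 : (s * C)ᴴ * (s * C) = 0 := by
    rw [conjTranspose_mul]
    calc Cᴴ * sᴴ * (s * C) = Cᴴ * (sᴴ * s) * C := by
          simp only [Matrix.mul_assoc]
      _ = 0 := by rw [hss, hzero]
  have hsC : s * C = 0 := Matrix.conjTranspose_mul_self_eq_zero.mp h3
  have hρC : ρ * C = 0 := by rw [← hss, Matrix.mul_assoc, hsC, Matrix.mul_zero]
  haveI := hρ.isUnit.invertible
  calc C = ρ⁻¹ * (ρ * C) := (Matrix.inv_mul_cancel_left_of_invertible ρ C).symm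
    _ = 0 := by rw [hρC, Matrix.mul_zero]

theorem stmt0 {d : ℕ} (ρ A B : Matrix (Fin d) (Fin d) ℂ)
    (hρ : ρ.PosDef) (hA : A.PosSemidef) (hB : B.PosSemidef)
    (hA0 : A ≠ 0) (hB0 : B ≠ 0) :
    (ρ * (A + B) * (A + B)).trace / (A + B).trace
      ≤ (ρ * A * A).trace / A.trace + (ρ * B * B).trace / B.trace ∧
    ((ρ * (A + B) * (A + B)).trace / (A + B).trace
        = (ρ * A * A).trace / A.trace + (ρ * B * B).trace / B.trace
      ↔ ∃ c : ℝ, 0 < c ∧ A = (c : ℂ) • B) := by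
  -- real, positive traces
  have realtr : ∀ M : Matrix (Fin d) (Fin d) ℂ, M.PosSemidef → M ≠ 0 →
      ∃ r : ℝ, 0 < r ∧ M.trace = (r : ℂ) := by
    intro M hM hM0
    refine ⟨M.trace.re, ?_, trace_real' hM⟩
    have h0 : (0:ℝ) ≤ M.trace.re := by
      simpa using (Complex.le_def.mp (trace_nonneg' hM)).1
    refine h0.lt_of_ne fun h => hM0 (psd_trace_eq_zero hM ?_)
    rw [trace_real' hM, ← h]; norm_num
  obtain ⟨ar, harpos, hAtr⟩ := realtr A hA hA0
  obtain ⟨br, hbrpos, hBtr⟩ := realtr B hB hB0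
  -- cyclic trick and real squared traces
  have hcyc : ∀ M : Matrix (Fin d) (Fin d) ℂ, Mᴴ = M →
      (ρ * M * M).trace = (Mᴴ * ρ * M).trace := by
    intro M hM
    conv_rhs => rw [hM]
    exact trace_mul_cycle ρ M M
  have realx : ∀ M : Matrix (Fin d) (Fin d) ℂ, Mᴴ = M →
      ∃ r : ℝ, 0 ≤ r ∧ (ρ * M * M).trace = (r : ℂ) := by
    intro M hM
    rw [hcyc M hM]
    refine ⟨_, ?_, trace_real' (hρ.posSemidef.conjTranspose_mul_mul_same M)⟩
    simpa using (Complex.le_def.mp (trace_nonneg' (hρ.posSemidef.conjTranspose_mul_mul_same M))).1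
  obtain ⟨xr, hxr0, hxr⟩ := realx A hA.isHermitian
  obtain ⟨yr, hyr0, hyr⟩ := realx B hB.isHermitian
  obtain ⟨tr2, htr20, htr2⟩ := realx (A + B) (by
    rw [conjTranspose_add, hA.isHermitian.eq, hB.isHermitian.eq])
  have hABtr : (A + B).trace = ((ar + br : ℝ) : ℂ) := by
    rw [trace_add, hAtr, hBtr]; push_cast; ring
  -- the key matrix C
  set C : Matrix (Fin d) (Fin d) ℂ := ((br:ℝ):ℂ) • A - ((ar:ℝ):ℂ) • B with hCdef
  have hCH : Cᴴ = C := by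
    simp [hCdef, conjTranspose_sub, conjTranspose_smul, hA.isHermitian.eq, hB.isHermitian.eq,
      Complex.star_def, Complex.conj_ofReal]
  have hCC : (ρ * C * C).trace
      = ((br * br * xr + ar * ar * yr - ar * br * (tr2 - xr - yr) : ℝ) : ℂ) := by
    have expand : (ρ * C * C).trace
        = ((br:ℂ) * br) * (ρ * A * A).trace + ((ar:ℂ) * ar) * (ρ * B * B).trace
          - ((ar:ℂ) * br) * ((ρ * (A + B) * (A + B)).trace
              - (ρ * A * A).trace - (ρ * B * B).trace) := by
      simp only [hCdef, Matrix.mul_sub, Matrix.sub_mul, Matrix.mul_add, Matrix.add_mul,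
        Matrix.mul_smul, Matrix.smul_mul, Matrix.trace_sub, Matrix.trace_add, Matrix.trace_smul,
        smul_smul, smul_eq_mul]
      ring
    rw [expand, hxr, hyr, htr2]; push_cast; ring
  have hCpos : 0 ≤ (ρ * C * C).trace := by
    rw [hcyc C hCH]
    exact trace_nonneg' (hρ.posSemidef.conjTranspose_mul_mul_same C)
  have hkey : 0 ≤ br * br * xr + ar * ar * yr - ar * br * (tr2 - xr - yr) := by
    rw [hCC] at hCpos
    exact_mod_cast hCpos
  have harne : ar ≠ 0 := ne_of_gt harpos
  have hbrne : br ≠ 0 := ne_of_gt hbrpos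
  have habne : ar + br ≠ 0 := ne_of_gt (by positivity)
  constructor
  · -- the inequality
    rw [htr2, hxr, hyr, hABtr, hAtr, hBtr, ← Complex.ofReal_div, ← Complex.ofReal_div,
      ← Complex.ofReal_div, ← Complex.ofReal_add, Complex.real_le_real]
    rw [div_add_div _ _ harne hbrne, div_le_div_iff₀ (by positivity) (by positivity)]
    nlinarith [hkey]
  constructor
  · -- equality → proportional
    intro heq
    rw [htr2, hxr, hyr, hABtr, hAtr, hBtr] at heq
    have heqr : tr2 / (ar + br) = xr / ar + yr / br := by exact_mod_cast heq
    have h1 : tr2 * (ar * br) = (xr * br + yr * ar) * (ar + br) := by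
      field_simp at heqr
      linarith [heqr]
    have h2 : (ρ * C * C).trace = 0 := by
      rw [hCC]
      have : br * br * xr + ar * ar * yr - ar * br * (tr2 - xr - yr) = 0 := by nlinarith [h1]
      rw [this]; norm_num
    have hC0 : C = 0 := key_zero' hρ hCH h2
    have hprop : ((br:ℝ):ℂ) • A = ((ar:ℝ):ℂ) • B := sub_eq_zero.mp hC0
    refine ⟨ar / br, div_pos harpos hbrpos, ?_⟩
    have hbrne' : ((br:ℝ):ℂ) ≠ 0 := by exact_mod_cast hbrne
    calc A = (((br:ℝ):ℂ)⁻¹ * ((br:ℝ):ℂ)) • A := by rw [inv_mul_cancel₀ hbrne', one_smul]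
      _ = ((br:ℝ):ℂ)⁻¹ • (((br:ℝ):ℂ) • A) := by rw [mul_smul]
      _ = ((br:ℝ):ℂ)⁻¹ • (((ar:ℝ):ℂ) • B) := by rw [hprop]
      _ = ((ar / br : ℝ) : ℂ) • B := by
          rw [smul_smul]; congr 1; push_cast; ring
  · -- proportional → equality
    rintro ⟨c, hc, rfl⟩
    have hbne : B.trace ≠ 0 := by rw [hBtr]; exact_mod_cast hbrne
    have hcne : ((c:ℝ):ℂ) ≠ 0 := by exact_mod_cast ne_of_gt hc
    have hc1 : ((c:ℝ):ℂ) + 1 ≠ 0 := by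
      intro h
      have := congrArg Complex.re h
      simp at this
      linarith
    have hsum : ((c:ℝ):ℂ) • B + B = (((c:ℝ):ℂ) + 1) • B := by rw [add_smul, one_smul]
    rw [hsum]
    simp only [Matrix.mul_smul, Matrix.smul_mul, Matrix.trace_smul, smul_eq_mul]
    field_simp
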